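/- For a finite alphabet A, assume ∂p_{θ,a}/∂θ_j = φ(p_{θ,a})(-∂α/∂θ_j - H_j(a)) holds for all a (with φ(0) interpreted as giving zero derivative on A_0(θ)). Define z(θ) = Σ'_a φ(p_{θ,a}), escort P_{θ,a} = φ(p_{θ,a})/z(θ), score X_{j,a} = (1/P_{θ,a}) ∂p_{θ,a}/∂θ_j, Fisher matrix I_{ij} = ⟨P_θ, X_i X_j⟩, covariance σ_{ij} = ⟨P_θ,H_iH_j⟩ - ⟨P_θ,H_i⟩⟨P_θ,H_j⟩, and metric g_{ij} = -∂⟨p_θ,H_j⟩/∂θ_i. Then I_{ij}(θ) = z(θ) g_{ij}(θ) = z(θ)^2 σ_{ij}(θ). -/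

import Mathlib

open Set

/-- Generalised Fisher information: for a finite alphabet, if
`∂p_{θ,a}/∂θ = φ(p_{θ,a})·(-Dα - Σ_j H_j(a) dθ_j)` on the support (zero derivative off
the support) and `Σ_a ∂p_{θ,a}/∂θ_j = 0`, then with `z(θ) = Σ'_a φ(p_{θ,a})`, escort
`P_{θ,a} = φ(p_{θ,a})/z(θ)`, scores `X_{j,a} = (1/P_{θ,a}) ∂p_{θ,a}/∂θ_j`, Fisher matrix
`I_{ij} = ⟨P,X_iX_j⟩`, covariance `σ_{ij} = ⟨P,H_iH_j⟩ - ⟨P,H_i⟩⟨P,H_j⟩` and metric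
`g_{ij} = -∂⟨p_θ,H_j⟩/∂θ_i`, one has `I_{ij} = z g_{ij} = z² σ_{ij}`. -/
theorem stmt_14 {A : Type*} [Fintype A] {n : ℕ}
    (p : (Fin n → ℝ) → A → ℝ) (θ : Fin n → ℝ) (φ : ℝ → ℝ) (α : (Fin n → ℝ) → ℝ)
    (H : Fin n → A → ℝ)
    (Dα : (Fin n → ℝ) →L[ℝ] ℝ) (Dp : A → ((Fin n → ℝ) →L[ℝ] ℝ))
    (hp0 : ∀ a, 0 ≤ p θ a) (hpsum : ∑ a, p θ a = 1)
    (hφpos : ∀ u : ℝ, 0 < u → u ≤ 1 → 0 < φ u)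
    (hα : HasFDerivAt α Dα θ)
    (hp : ∀ a, HasFDerivAt (fun ϑ => p ϑ a) (Dp a) θ)
    (hpeq : ∀ a, p θ a ≠ 0 → Dp a = φ (p θ a) •
      (-Dα - ∑ j, H j a • (ContinuousLinearMap.proj j : (Fin n → ℝ) →L[ℝ] ℝ)))
    (hp0' : ∀ a, p θ a = 0 → Dp a = 0)
    (hreg : ∑ a, Dp a = 0)
    (z : ℝ) (hz : z = ∑ a, {a | p θ a ≠ 0}.indicator (fun a => φ (p θ a)) a)
    (P : A → ℝ) (hP : ∀ a, P a = {a | p θ a ≠ 0}.indicator (fun a => φ (p θ a)) a / z)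
    (X : Fin n → A → ℝ) (hX : ∀ j a, X j a = (1 / P a) * Dp a (Pi.single j 1))
    (Imat σmat g : Fin n → Fin n → ℝ)
    (hI : ∀ i j, Imat i j = ∑ a, P a * (X i a * X j a))
    (hσ : ∀ i j, σmat i j =
      (∑ a, P a * (H i a * H j a)) - (∑ a, P a * H i a) * (∑ a, P a * H j a))
    (hg : ∀ i j, g i j = -(∑ a, Dp a (Pi.single i 1) * H j a)) :
    ∀ i j, Imat i j = z * g i j ∧ Imat i j = z ^ 2 * σmat i j := by
  classical
  set c : Fin n → ℝ := fun j => Dα (Pi.single j 1) with hc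
  set F : A → ℝ := fun a => if p θ a = 0 then 0 else φ (p θ a) with hF
  have hple : ∀ a, p θ a ≤ 1 := by
    intro a
    rw [← hpsum]
    exact Finset.single_le_sum (fun b _ => hp0 b) (Finset.mem_univ a)
  have hφpos' : ∀ a, p θ a ≠ 0 → 0 < φ (p θ a) := fun a ha =>
    hφpos _ (lt_of_le_of_ne (hp0 a) (Ne.symm ha)) (hple a)
  have hFnn : ∀ a, 0 ≤ F a := by
    intro a; simp only [hF]; split_ifs with h
    · exact le_refl 0
    · exact (hφpos' a h).le
  have hzF : z = ∑ a, F a := by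
    rw [hz]
    refine Finset.sum_congr rfl fun a _ => ?_
    by_cases h : p θ a = 0 <;> simp [Set.indicator_apply, hF, h]
  have hP' : ∀ a, P a = F a / z := by
    intro a
    rw [hP]
    congr 1
    by_cases h : p θ a = 0 <;> simp [Set.indicator_apply, hF, h]
  obtain ⟨a0, ha0⟩ : ∃ a, p θ a ≠ 0 := by
    by_contra h
    push_neg at h
    simp [h] at hpsum
  have hzpos : 0 < z := by
    rw [hzF]
    refine Finset.sum_pos' (fun a _ => hFnn a) ⟨a0, Finset.mem_univ a0, ?_⟩
    simpa [hF, ha0] using hφpos' a0 ha0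
  have hzne : z ≠ 0 := ne_of_gt hzpos
  have hDpe : ∀ a (j : Fin n), Dp a (Pi.single j 1) = F a * (-(c j) - H j a) := by
    intro a j
    by_cases ha : p θ a = 0
    · simp [hp0' a ha, hF, ha]
    · rw [hpeq a ha]
      simp only [hF, if_neg ha, ContinuousLinearMap.smul_apply, smul_eq_mul,
        ContinuousLinearMap.sub_apply, ContinuousLinearMap.neg_apply,
        ContinuousLinearMap.coe_sum', Finset.sum_apply,
        ContinuousLinearMap.proj_apply, Pi.single_apply, hc]
      congr 1
      congr 1
      simp [Pi.single_apply, mul_ite]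
  have hFH : ∀ j : Fin n, ∑ a, F a * H j a = -(z * c j) := by
    intro j
    have h0 : ∑ a, Dp a (Pi.single j 1) = 0 := by
      rw [← ContinuousLinearMap.sum_apply, hreg]; rfl
    have h1 : ∑ a, (F a * (-(c j)) - F a * H j a) = 0 := by
      rw [← h0]
      exact Finset.sum_congr rfl fun a _ => by rw [hDpe]; ring
    rw [Finset.sum_sub_distrib, ← Finset.sum_mul, ← hzF] at h1
    have h2 : ∑ a, F a * H j a = z * (-(c j)) := by linarith
    rw [h2]; ring
  intro i j
  set S1 : ℝ := ∑ a, F a * (H i a * H j a) with hS1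
  have hIval : Imat i j = z * (S1 - z * (c i * c j)) := by
    rw [hI]
    have hterm : ∀ a, P a * (X i a * X j a)
        = z * (F a * ((c i + H i a) * (c j + H j a))) := by
      intro a
      by_cases ha : p θ a = 0
      · simp [hP', hF, ha]
      · have hFne : F a ≠ 0 := by simp [hF, ha]; exact ne_of_gt (hφpos' a ha)
        rw [hX, hX, hP', hDpe, hDpe]
        field_simp
        ring
    rw [Finset.sum_congr rfl fun a _ => hterm a, ← Finset.mul_sum]
    have hexp : ∑ a, F a * ((c i + H i a) * (c j + H j a))
        = S1 + c i * (∑ a, F a * H j a) + c j * (∑ a, F a * H i a)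
          + c i * c j * (∑ a, F a) := by
      rw [hS1, Finset.mul_sum, Finset.mul_sum, Finset.mul_sum,
        ← Finset.sum_add_distrib, ← Finset.sum_add_distrib, ← Finset.sum_add_distrib]
      exact Finset.sum_congr rfl fun a _ => by ring
    rw [hexp, hFH i, hFH j, ← hzF]
    ring
  have hgval : g i j = S1 - z * (c i * c j) := by
    rw [hg]
    have h1 : ∑ a, Dp a (Pi.single i 1) * H j a
        = ∑ a, (-(c i) * (F a * H j a) - F a * (H i a * H j a)) :=
      Finset.sum_congr rfl fun a _ => by rw [hDpe]; ring
    rw [h1, Finset.sum_sub_distrib, ← Finset.mul_sum, hFH j, ← hS1]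
    ring
  have hσval : σmat i j = S1 / z - c i * c j := by
    rw [hσ]
    have h1 : ∑ a, P a * (H i a * H j a) = S1 / z := by
      rw [hS1, Finset.sum_div]
      exact Finset.sum_congr rfl fun a _ => by rw [hP']; ring
    have h2 : ∀ k : Fin n, ∑ a, P a * H k a = -(c k) := by
      intro k
      have : ∑ a, P a * H k a = (∑ a, F a * H k a) / z := by
        rw [Finset.sum_div]
        exact Finset.sum_congr rfl fun a _ => by rw [hP']; ring
      rw [this, hFH k]
      field_simp
    rw [h1, h2 i, h2 j]
    ring
  constructor
  · rw [hIval, hgval]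
  · rw [hIval, hσval]
    field_simp
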